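/- arXiv:0803.2389 — 6 statements merged into one kernel-verified Lean document; each statement's English description precedes it below -/
import Mathlib

section
/- Let h : [0,∞) → ℝ be bounded and continuous. Then for every x ≥ 0 the map x ↦ T_h x is differentiable, and its derivative equals exp(∫_0^1 h(T_{sh} x) ds); equivalently, the logarithmic derivative r_h(x) of the transformation T_h satisfies r_h(x) = ∫_0^1 h(T_{sh} x) ds. -/
open MeasureTheory Set Filter Topology

/-- `J h x = ∫_0^x h(s) ds` for `x ≥ 0`, extended by `0` for `x < 0`. -/
noncomputable def J (h : ℝ → ℝ) (x : ℝ) : ℝ :=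
  if 0 ≤ x then ∫ s in (0:ℝ)..x, h s else 0

/-- `z` is a solution to the Cauchy problem `z'(s) = Jh(z(s))`, `z(0) = x`, on all of `ℝ`.
The time-stretching transformations are `T_h^t x = z_{x,h}(t)` and `T_h = T_h^1`;
thus `T_h y = W y 1` where `W y` solves the problem for `h` started at `y`, and
`T_{sh} x = Z s 1` where `Z s` solves the problem for `s • h` started at `x`. -/
def IsSol (h : ℝ → ℝ) (x : ℝ) (z : ℝ → ℝ) : Prop :=
  z 0 = x ∧ ∀ s : ℝ, HasDerivAt z (J h (z s)) s

namespace Stmt3Aux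

lemma J_of_nonneg (h : ℝ → ℝ) {z : ℝ} (hz : 0 ≤ z) : J h z = ∫ s in (0:ℝ)..z, h s :=
  if_pos hz

lemma J_of_nonpos (h : ℝ → ℝ) {z : ℝ} (hz : z ≤ 0) : J h z = 0 := by
  unfold J
  split
  · have hz0 : z = 0 := le_antisymm hz (by assumption)
    simp [hz0]
  · rfl

lemma J_zero (h : ℝ → ℝ) : J h 0 = 0 := J_of_nonpos h le_rfl

lemma J_smul (h : ℝ → ℝ) (c z : ℝ) : J (c • h) z = c * J h z := by
  unfold J
  split
  · simp [Pi.smul_apply, smul_eq_mul, intervalIntegral.integral_const_mul]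
  · ring

variable {h : ℝ → ℝ} {C : ℝ}

lemma abs_J_sub (hc : Continuous h) (hb : ∀ s, |h s| ≤ C) (a b : ℝ) :
    |J h a - J h b| ≤ C * |a - b| := by
  have hC : 0 ≤ C := le_trans (abs_nonneg _) (hb 0)
  have hbound : ∀ p q : ℝ, |∫ s in p..q, h s| ≤ C * |q - p| := by
    intro p q
    have := intervalIntegral.norm_integral_le_of_norm_le_const (C := C)
      (f := h) (a := p) (b := q) (fun s _ => by
        rw [Real.norm_eq_abs]; exact hb s)
    simpa [Real.norm_eq_abs] using this
  rcases le_or_gt 0 a with ha | ha <;> rcases le_or_gt 0 b with hb' | hb'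
  · rw [J_of_nonneg h ha, J_of_nonneg h hb',
      intervalIntegral.integral_interval_sub_left (hc.intervalIntegrable 0 a)
        (hc.intervalIntegrable 0 b)]
    exact hbound b a
  · rw [J_of_nonneg h ha, J_of_nonpos h hb'.le, sub_zero]
    have h1 := hbound 0 a
    rw [sub_zero] at h1
    refine h1.trans ?_
    have h2 : |a| ≤ |a - b| := by
      rw [abs_of_nonneg ha, abs_of_nonneg (by linarith)]; linarith
    nlinarith
  · rw [J_of_nonpos h ha.le, J_of_nonneg h hb', zero_sub, abs_neg]
    have h1 := hbound 0 b
    rw [sub_zero] at h1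
    refine h1.trans ?_
    have h2 : |b| ≤ |a - b| := by
      rw [abs_of_nonneg hb', abs_of_nonpos (by linarith)]; linarith
    nlinarith
  · rw [J_of_nonpos h ha.le, J_of_nonpos h hb'.le]
    simp
    positivity

lemma abs_J (hc : Continuous h) (hb : ∀ s, |h s| ≤ C) (z : ℝ) : |J h z| ≤ C * |z| := by
  have := abs_J_sub hc hb z 0
  simpa [J_zero] using this

lemma J_lip (hc : Continuous h) (hb : ∀ s, |h s| ≤ C) :
    LipschitzWith C.toNNReal (J h) := by
  have hC : 0 ≤ C := le_trans (abs_nonneg _) (hb 0)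
  apply LipschitzWith.of_dist_le_mul
  intro a b
  rw [Real.dist_eq, Real.dist_eq, Real.coe_toNNReal _ hC]
  exact abs_J_sub hc hb a b

lemma sol_cont {z : ℝ → ℝ} (hz : ∀ s, HasDerivAt z (J h (z s)) s) : Continuous z :=
  continuous_iff_continuousAt.2 fun t => (hz t).continuousAt

lemma sol_nonneg {z : ℝ → ℝ} (hz : ∀ s, HasDerivAt z (J h (z s)) s) (hy : 0 ≤ z 0) :
    ∀ t, 0 ≤ t → 0 ≤ z t := by
  intro t1 ht1
  by_contra hneg
  push_neg at hneg
  have hzc : Continuous z := sol_cont hz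
  set S : Set ℝ := Icc 0 t1 ∩ {t | 0 ≤ z t} with hSdef
  have hne : (0:ℝ) ∈ S := ⟨⟨le_rfl, ht1⟩, hy⟩
  have hbddS : BddAbove S := ⟨t1, fun t ht => ht.1.2⟩
  set t0 := sSup S with ht0def
  have hclosed : IsClosed S := isClosed_Icc.inter (isClosed_le continuous_const hzc)
  have ht0S : t0 ∈ S := hclosed.csSup_mem ⟨0, hne⟩ hbddS
  have ht0le : t0 ≤ t1 := ht0S.1.2
  have ht0lt : t0 < t1 := lt_of_le_of_ne ht0le (fun he => absurd (he ▸ ht0S.2) (not_le.mpr hneg))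
  have hz_t0 : z t0 = 0 := by
    by_contra hne0
    have hpos : 0 < z t0 := lt_of_le_of_ne ht0S.2 (Ne.symm hne0)
    have hev : ∀ᶠ t in 𝓝 t0, 0 < z t := hzc.continuousAt.preimage_mem_nhds (Ioi_mem_nhds hpos)
    have hev' : ∀ᶠ t in 𝓝[>] t0, 0 < z t := hev.filter_mono nhdsWithin_le_nhds
    have hmem : Ioc t0 t1 ∈ 𝓝[>] t0 := Ioc_mem_nhdsGT_of_mem ⟨le_rfl, ht0lt⟩
    obtain ⟨t, htpos, htIoc⟩ := (hev'.and (eventually_of_mem hmem fun t ht => ht)).exists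
    have htS : t ∈ S := ⟨⟨le_trans ht0S.1.1 htIoc.1.le, htIoc.2⟩, htpos.le⟩
    exact absurd (le_csSup hbddS htS) (not_le.mpr htIoc.1)
  have hconst : ∀ t ∈ Icc t0 t1, z t = z t0 := by
    apply constant_of_has_deriv_right_zero hzc.continuousOn
    intro t ht
    have hJ0 : J h (z t) = 0 := by
      rcases eq_or_lt_of_le ht.1 with he | hlt
      · rw [← he, hz_t0]; exact J_zero h
      · have hnotS : t ∉ S := fun hmemS => absurd (le_csSup hbddS hmemS) (not_le.mpr hlt)
        have : ¬ (0 ≤ z t) := fun hge =>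
          hnotS ⟨⟨le_trans ht0S.1.1 hlt.le, ht.2.le⟩, hge⟩
        exact J_of_nonpos h (not_le.1 this).le
    exact hJ0 ▸ (hz t).hasDerivWithinAt
  have := hconst t1 ⟨ht0le, le_rfl⟩
  rw [hz_t0] at this
  exact absurd this.ge (not_le.mpr hneg)

lemma sol_le (hc : Continuous h) (hb : ∀ s, |h s| ≤ C) {z : ℝ → ℝ}
    (hz : ∀ s, HasDerivAt z (J h (z s)) s) :
    ∀ t ∈ Icc (0:ℝ) 1, |z t| ≤ |z 0| * Real.exp C := by
  have hC : 0 ≤ C := le_trans (abs_nonneg _) (hb 0)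
  have key := norm_le_gronwallBound_of_norm_deriv_right_le (f := z)
    (f' := fun t => J h (z t)) (δ := |z 0|) (K := C) (ε := 0) (a := 0) (b := 1)
    (sol_cont hz).continuousOn (fun t _ => (hz t).hasDerivWithinAt)
    (le_of_eq (Real.norm_eq_abs _))
    (fun t _ => by
      rw [Real.norm_eq_abs, Real.norm_eq_abs, add_zero]
      exact abs_J hc hb (z t))
  intro t ht
  have h1 := key t ht
  rw [Real.norm_eq_abs, sub_zero, gronwallBound_ε0] at h1
  refine h1.trans ?_
  have : Real.exp (C * t) ≤ Real.exp C := Real.exp_le_exp.2 (by nlinarith [ht.1, ht.2])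
  exact mul_le_mul_of_nonneg_left this (abs_nonneg _)

lemma sol_close (hc : Continuous h) (hb : ∀ s, |h s| ≤ C) {z1 z2 : ℝ → ℝ}
    (h1 : ∀ s, HasDerivAt z1 (J h (z1 s)) s) (h2 : ∀ s, HasDerivAt z2 (J h (z2 s)) s) :
    ∀ t ∈ Icc (0:ℝ) 1, |z1 t - z2 t| ≤ |z1 0 - z2 0| * Real.exp C := by
  have hC : 0 ≤ C := le_trans (abs_nonneg _) (hb 0)
  have key := dist_le_of_trajectories_ODE (v := fun _ y => J h y) (K := C.toNNReal)
    (δ := dist (z1 0) (z2 0)) (a := 0) (b := 1)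
    (fun _ => J_lip hc hb) (sol_cont h1).continuousOn (fun t _ => (h1 t).hasDerivWithinAt)
    (sol_cont h2).continuousOn (fun t _ => (h2 t).hasDerivWithinAt) le_rfl
  intro t ht
  have h3 := key t ht
  rw [Real.dist_eq, Real.dist_eq, sub_zero, Real.coe_toNNReal _ hC] at h3
  refine h3.trans ?_
  have : Real.exp (C * t) ≤ Real.exp C := Real.exp_le_exp.2 (by nlinarith [ht.1, ht.2])
  exact mul_le_mul_of_nonneg_left this (abs_nonneg _)

lemma gronwallBound_le_of (hC : 0 ≤ C) {ε : ℝ} (hε : 0 ≤ ε) :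
    gronwallBound 0 C ε 1 ≤ ε * Real.exp C := by
  rcases eq_or_lt_of_le hC with h0 | h0
  · rw [← h0, gronwallBound_K0]
    simp only [zero_add, mul_one, Real.exp_zero]
    exact le_rfl
  · rw [gronwallBound_of_K_ne_0 (ne_of_gt h0)]
    simp only [zero_mul, zero_add, mul_one]
    rw [div_mul_eq_mul_div, div_le_iff₀ h0]
    have hid : Real.exp (-C) * Real.exp C = 1 := by rw [← Real.exp_add]; simp
    have hie := Real.add_one_le_exp (-C)
    have h3 := mul_le_mul_of_nonneg_right hie (Real.exp_pos C).le
    rw [hid] at h3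
    have h2 : Real.exp C - 1 ≤ C * Real.exp C := by nlinarith
    nlinarith [mul_le_mul_of_nonneg_left h2 hε]

lemma key_estimate (hc : Continuous h) (hb : ∀ s, |h s| ≤ C) {x y : ℝ} (hx : 0 ≤ x) (hy : 0 ≤ y)
    {w u : ℝ → ℝ} (hw : w 0 = x) (hw' : ∀ s, HasDerivAt w (J h (w s)) s)
    (hu : u 0 = y) (hu' : ∀ s, HasDerivAt u (J h (u s)) s)
    {v : ℝ → ℝ} (hv0 : v 0 = 1) (hv' : ∀ t, HasDerivAt v (h (w t) * v t) t)
    {ε₁ δ : ℝ} (hε₁ : 0 < ε₁) (hδ : 0 < δ)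
    (hunif : ∀ p ∈ Icc 0 ((x + 1) * Real.exp C), ∀ q ∈ Icc 0 ((x + 1) * Real.exp C),
      |p - q| < δ → |h p - h q| ≤ ε₁)
    (hyx1 : |y - x| ≤ 1) (hyxδ : |y - x| * Real.exp C < δ) :
    |u 1 - w 1 - (y - x) * v 1| ≤ ε₁ * Real.exp C * Real.exp C * |y - x| := by
  have hC : 0 ≤ C := le_trans (abs_nonneg _) (hb 0)
  have hwn : ∀ t, 0 ≤ t → 0 ≤ w t := sol_nonneg hw' (by rw [hw]; exact hx)
  have hun : ∀ t, 0 ≤ t → 0 ≤ u t := sol_nonneg hu' (by rw [hu]; exact hy)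
  have hyle : y ≤ x + 1 := by
    have := (abs_le.1 hyx1).2; linarith
  have hwle : ∀ t ∈ Icc (0:ℝ) 1, w t ≤ (x + 1) * Real.exp C := by
    intro t ht
    have h1 := sol_le hc hb hw' t ht
    rw [hw, abs_of_nonneg hx] at h1
    have h2 := le_trans (le_abs_self _) h1
    nlinarith [Real.exp_pos C]
  have hule : ∀ t ∈ Icc (0:ℝ) 1, u t ≤ (x + 1) * Real.exp C := by
    intro t ht
    have h1 := sol_le hc hb hu' t ht
    rw [hu, abs_of_nonneg hy] at h1
    have h2 := le_trans (le_abs_self _) h1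
    nlinarith [Real.exp_pos C]
  have hclose : ∀ t ∈ Icc (0:ℝ) 1, |u t - w t| ≤ |y - x| * Real.exp C := by
    intro t ht
    have := sol_close hc hb hu' hw' t ht
    rwa [hu, hw] at this
  set D : ℝ → ℝ := fun t => u t - w t - (y - x) * v t with hD
  have hD' : ∀ t, HasDerivAt D (J h (u t) - J h (w t) - (y - x) * (h (w t) * v t)) t :=
    fun t => ((hu' t).sub (hw' t)).sub ((hv' t).const_mul (y - x))
  have hrem : ∀ t ∈ Icc (0:ℝ) 1,
      |J h (u t) - J h (w t) - h (w t) * (u t - w t)| ≤ ε₁ * (|y - x| * Real.exp C) := by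
    intro t ht
    have hw0 := hwn t ht.1
    have hu0 := hun t ht.1
    have heq : J h (u t) - J h (w t) = ∫ σ in (w t)..(u t), h σ := by
      rw [J_of_nonneg h hu0, J_of_nonneg h hw0,
        intervalIntegral.integral_interval_sub_left (hc.intervalIntegrable 0 (u t))
          (hc.intervalIntegrable 0 (w t))]
    have hconst : h (w t) * (u t - w t) = ∫ _σ in (w t)..(u t), h (w t) := by
      rw [intervalIntegral.integral_const, smul_eq_mul]; ring
    rw [heq, hconst, ← intervalIntegral.integral_sub (hc.intervalIntegrable _ _)
      intervalIntegrable_const]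
    have key := intervalIntegral.norm_integral_le_of_norm_le_const (C := ε₁)
      (f := fun σ => h σ - h (w t)) (a := w t) (b := u t) ?_
    · rw [Real.norm_eq_abs] at key
      refine key.trans ?_
      have h1 : |u t - w t| ≤ |y - x| * Real.exp C := hclose t ht
      exact mul_le_mul_of_nonneg_left h1 hε₁.le
    · intro σ hσ
      have hminle : min (w t) (u t) ≤ w t := min_le_left _ _
      have hlemax : w t ≤ max (w t) (u t) := le_max_left _ _
      have hσ0 : 0 ≤ σ := le_trans (le_min hw0 hu0) hσ.1.le
      have hσM : σ ≤ (x + 1) * Real.exp C := le_trans hσ.2 (max_le (hwle t ht) (hule t ht))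
      have hrange : max (w t) (u t) - min (w t) (u t) = |u t - w t| := by
        rw [abs_sub_comm, ← max_sub_min_eq_abs, max_comm, min_comm]
      have h1 : |σ - w t| ≤ |u t - w t| := by
        rw [abs_sub_le_iff]
        constructor <;> [linarith [hσ.2, hrange, hminle]; linarith [hσ.1.le, hrange, hlemax]]
      have hdist : |σ - w t| < δ := lt_of_le_of_lt (h1.trans (hclose t ht)) hyxδ
      rw [Real.norm_eq_abs]
      exact hunif σ ⟨hσ0, hσM⟩ (w t) ⟨hw0, hwle t ht⟩ hdist
  have hbound : ∀ t ∈ Ico (0:ℝ) 1,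
      ‖J h (u t) - J h (w t) - (y - x) * (h (w t) * v t)‖
        ≤ C * ‖D t‖ + ε₁ * (|y - x| * Real.exp C) := by
    intro t ht
    have ht' : t ∈ Icc (0:ℝ) 1 := ⟨ht.1, ht.2.le⟩
    have h1 := hrem t ht'
    have h2 : J h (u t) - J h (w t) - (y - x) * (h (w t) * v t)
        = (J h (u t) - J h (w t) - h (w t) * (u t - w t)) + h (w t) * D t := by
      simp only [hD]; ring
    rw [Real.norm_eq_abs, Real.norm_eq_abs, h2]
    have h3 : |h (w t) * D t| ≤ C * |D t| := by
      rw [abs_mul]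
      exact mul_le_mul_of_nonneg_right (hb _) (abs_nonneg _)
    calc |(J h (u t) - J h (w t) - h (w t) * (u t - w t)) + h (w t) * D t|
        ≤ |J h (u t) - J h (w t) - h (w t) * (u t - w t)| + |h (w t) * D t| := abs_add_le _ _
      _ ≤ ε₁ * (|y - x| * Real.exp C) + C * |D t| := add_le_add h1 h3
      _ = C * |D t| + ε₁ * (|y - x| * Real.exp C) := by ring
  have hD0 : D 0 = 0 := by simp [hD, hu, hw, hv0]
  have hDc : Continuous D := continuous_iff_continuousAt.2 fun t => (hD' t).continuousAt
  have key := norm_le_gronwallBound_of_norm_deriv_right_le (f := D)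
    (f' := fun t => J h (u t) - J h (w t) - (y - x) * (h (w t) * v t)) (δ := 0) (K := C)
    (ε := ε₁ * (|y - x| * Real.exp C)) (a := 0) (b := 1)
    hDc.continuousOn (fun t _ => (hD' t).hasDerivWithinAt)
    (by rw [hD0]; simp) hbound 1 (by norm_num)
  rw [sub_zero] at key
  have hε₂ : 0 ≤ ε₁ * (|y - x| * Real.exp C) := by positivity
  have hfin := key.trans (gronwallBound_le_of hC hε₂)
  rw [Real.norm_eq_abs] at hfin
  calc |u 1 - w 1 - (y - x) * v 1| = |D 1| := rfl
    _ ≤ ε₁ * (|y - x| * Real.exp C) * Real.exp C := hfin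
    _ = ε₁ * Real.exp C * Real.exp C * |y - x| := by ring

end Stmt3Aux

open Stmt3Aux in
/-- For `h` bounded and continuous on `[0,∞)`, the map `x ↦ T_h x` is differentiable
(on `[0,∞)`) with derivative `exp (∫_0^1 h (T_{sh} x) ds)`. -/
theorem stmt3 (h : ℝ → ℝ) (C : ℝ) (hbdd : ∀ x : ℝ, 0 ≤ x → |h x| ≤ C)
    (hcont : ContinuousOn h (Set.Ici 0)) (x : ℝ) (hx : 0 ≤ x)
    (W : ℝ → ℝ → ℝ) (hW : ∀ y : ℝ, 0 ≤ y → IsSol h y (W y))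
    (Z : ℝ → ℝ → ℝ) (hZ : ∀ s : ℝ, IsSol (s • h) x (Z s)) :
    HasDerivWithinAt (fun y : ℝ => W y 1)
      (Real.exp (∫ s in (0:ℝ)..1, h (Z s 1))) (Set.Ici 0) x := by
  have hC : 0 ≤ C := le_trans (abs_nonneg _) (hbdd 0 le_rfl)
  set h' : ℝ → ℝ := fun s => h (max s 0) with hh'
  have hc' : Continuous h' :=
    hcont.comp_continuous (continuous_id.max continuous_const) (fun s => mem_Ici.2 (le_max_right _ _))
  have hb' : ∀ s, |h' s| ≤ C := fun s => hbdd _ (le_max_right _ _)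
  have hJ : J h' = J h := by
    funext z
    by_cases hz : 0 ≤ z
    · rw [J_of_nonneg h' hz, J_of_nonneg h hz]
      apply intervalIntegral.integral_congr
      intro σ hσ
      rw [uIcc_of_le hz] at hσ
      show h' σ = h σ
      simp only [hh', max_eq_left hσ.1]
    · rw [J_of_nonpos h' (not_le.1 hz).le, J_of_nonpos h (not_le.1 hz).le]
  obtain ⟨hw0, hw'⟩ := hW x hx
  have hw'' : ∀ s, HasDerivAt (W x) (J h' (W x s)) s := by rw [hJ]; exact hw'
  have hwn : ∀ t, 0 ≤ t → 0 ≤ W x t := sol_nonneg hw'' (by rw [hw0]; exact hx)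
  -- Z s 1 = W x s for s ∈ [0,1]
  have hZW : ∀ s ∈ Icc (0:ℝ) 1, Z s 1 = W x s := by
    intro s hs
    obtain ⟨hZ0, hZ'⟩ := hZ s
    have hlip : ∀ _t : ℝ, LipschitzWith C.toNNReal (fun z => J (s • h) z) := by
      intro _t
      apply LipschitzWith.of_dist_le_mul
      intro a b
      rw [Real.dist_eq, Real.dist_eq, Real.coe_toNNReal _ hC, J_smul, J_smul, ← mul_sub,
        abs_mul, abs_of_nonneg hs.1]
      calc s * |J h a - J h b| ≤ 1 * (C * |a - b|) := by
            rw [← hJ]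
            exact mul_le_mul hs.2 (abs_J_sub hc' hb' a b) (abs_nonneg _) zero_le_one
        _ = C * |a - b| := one_mul _
    have hg' : ∀ t : ℝ, HasDerivAt (fun t => W x (t * s)) (J (s • h) (W x (t * s))) t := by
      intro t
      have h1 : HasDerivAt (fun t : ℝ => t * s) s t := hasDerivAt_mul_const s
      have h2 := (hw' (t * s)).comp t h1
      have h3 : J (s • h) (W x (t * s)) = J h (W x (t * s)) * s := by rw [J_smul]; ring
      rw [h3]
      exact h2
    have hgc : Continuous (fun t : ℝ => W x (t * s)) :=
      (sol_cont hw'').comp (continuous_id.mul continuous_const)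
    have uniq := ODE_solution_unique (v := fun _ z => J (s • h) z) (a := 0) (b := 1)
      hlip (sol_cont hZ').continuousOn (fun t _ => (hZ' t).hasDerivWithinAt)
      hgc.continuousOn (fun t _ => (hg' t).hasDerivWithinAt)
      (by rw [hZ0, zero_mul, hw0])
    have := uniq ⟨zero_le_one, le_rfl⟩
    simpa using this
  have hint : (∫ s in (0:ℝ)..1, h (Z s 1)) = ∫ s in (0:ℝ)..1, h' (W x s) := by
    apply intervalIntegral.integral_congr
    intro s hs
    rw [uIcc_of_le zero_le_one] at hs
    show h (Z s 1) = h' (W x s)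
    rw [hZW s hs]
    simp only [hh', max_eq_left (hwn s hs.1)]
  -- variational solution v
  have hφc : Continuous (fun t => h' (W x t)) := hc'.comp (sol_cont hw'')
  set g : ℝ → ℝ := fun t => ∫ τ in (0:ℝ)..t, h' (W x τ) with hg
  have hg' : ∀ t, HasDerivAt g (h' (W x t)) t :=
    fun t => (hφc.integral_hasStrictDerivAt 0 t).hasDerivAt
  set v : ℝ → ℝ := fun t => Real.exp (g t) with hv
  have hv' : ∀ t, HasDerivAt v (h' (W x t) * v t) t := by
    intro t
    have := (hg' t).exp
    simpa [hv, mul_comm] using this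
  have hv0 : v 0 = 1 := by simp [hv, hg]
  have hmain : HasDerivWithinAt (fun y : ℝ => W y 1) (v 1) (Set.Ici 0) x := by
    rw [hasDerivWithinAt_iff_isLittleO, Asymptotics.isLittleO_iff]
    intro c hc
    have hunifc := isCompact_Icc.uniformContinuousOn_of_continuous
      (s := Icc (0:ℝ) ((x + 1) * Real.exp C)) hc'.continuousOn
    have hε₁pos : 0 < c / (Real.exp C * Real.exp C) := by positivity
    obtain ⟨δ, hδ, hδ'⟩ := (Metric.uniformContinuousOn_iff).1 hunifc _ hε₁pos
    have hunif : ∀ p ∈ Icc (0:ℝ) ((x + 1) * Real.exp C),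
        ∀ q ∈ Icc (0:ℝ) ((x + 1) * Real.exp C),
        |p - q| < δ → |h' p - h' q| ≤ c / (Real.exp C * Real.exp C) := by
      intro p hp q hq hpq
      have := hδ' p hp q hq (by rwa [Real.dist_eq])
      rw [Real.dist_eq] at this
      exact this.le
    have hρpos : 0 < min 1 (δ / Real.exp C) := lt_min one_pos (by positivity)
    have hball : ∀ᶠ y in nhdsWithin x (Set.Ici 0), dist y x < min 1 (δ / Real.exp C) :=
      Filter.Eventually.filter_mono nhdsWithin_le_nhds
        (Metric.ball_mem_nhds x hρpos)
    filter_upwards [hball, self_mem_nhdsWithin] with y hdist hy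
    have hy' : (0:ℝ) ≤ y := hy
    obtain ⟨hu0, hu'⟩ := hW y hy'
    have hu'' : ∀ s, HasDerivAt (W y) (J h' (W y s)) s := by rw [hJ]; exact hu'
    rw [Real.dist_eq] at hdist
    have hyx1 : |y - x| ≤ 1 := le_trans hdist.le (min_le_left _ _)
    have hyxδ : |y - x| * Real.exp C < δ := by
      have h1 : |y - x| < δ / Real.exp C := lt_of_lt_of_le hdist (min_le_right _ _)
      rwa [lt_div_iff₀ (Real.exp_pos C)] at h1
    have key := key_estimate hc' hb' hx hy' hw0 hw'' hu0 hu'' hv0 hv'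
      hε₁pos hδ hunif hyx1 hyxδ
    rw [Real.norm_eq_abs, Real.norm_eq_abs, smul_eq_mul]
    have heq : c / (Real.exp C * Real.exp C) * Real.exp C * Real.exp C * |y - x|
        = c * |y - x| := by
      field_simp
    calc |W y 1 - W x 1 - (y - x) * v 1|
        ≤ c / (Real.exp C * Real.exp C) * Real.exp C * Real.exp C * |y - x| := key
      _ = c * |y - x| := heq
  have hfinal : Real.exp (∫ s in (0:ℝ)..1, h (Z s 1)) = v 1 := by
    rw [hint]
  rw [hfinal]
  exact hmain
end

section
/- Let h : [0,∞) → ℝ be bounded measurable, and let 0 ≤ a < b < ∞ be such that Jh(x) > 0 for x ∈ (a,b) and Jh(x) = 0 for x ∉ (a,b). Then: (i) for every x ∉ (a,b) and every t ∈ ℝ, T_{th} x = x; (ii) for every x ∈ (a,b), the map ℝ ∋ t ↦ T_{th} x is strictly increasing, takes values in (a,b), and satisfies T_{th} x → b as t → +∞ and T_{th} x → a as t → −∞; in particular t ↦ T_{th} x is a bijection from ℝ onto (a,b). -/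
open MeasureTheory Set Filter

/-- Global uniqueness for autonomous ODEs with Lipschitz right-hand side. -/
lemma ode_uniq {v : ℝ → ℝ} {K : NNReal} (hv : LipschitzWith K v) {f g : ℝ → ℝ}
    (hf : ∀ s : ℝ, HasDerivAt f (v (f s)) s) (hg : ∀ s : ℝ, HasDerivAt g (v (g s)) s)
    (t₀ : ℝ) (heq : f t₀ = g t₀) : ∀ t : ℝ, f t = g t := by
  intro t
  have hmem : ∀ u : ℝ, u ∈ Set.Icc (min t₀ t) (max t₀ t) →
      u ∈ Set.Ioo (min t₀ t - 1) (max t₀ t + 1) := by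
    intro u hu
    exact ⟨by linarith [hu.1], by linarith [hu.2]⟩
  have := ODE_solution_unique_of_mem_Ioo (v := fun _ => v) (s := fun _ => Set.univ)
    (fun _ _ => hv.lipschitzOnWith) (t₀ := t₀)
    (a := min t₀ t - 1) (b := max t₀ t + 1)
    (hmem t₀ ⟨min_le_left _ _, le_max_left _ _⟩)
    (f := f) (g := g)
    (fun u _ => ⟨hf u, trivial⟩) (fun u _ => ⟨hg u, trivial⟩) heq
  exact this (hmem t ⟨min_le_right _ _, le_max_right _ _⟩)

lemma J_smul (h : ℝ → ℝ) (t y : ℝ) : J (t • h) y = t * J h y := by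
  unfold J
  split_ifs with hy
  · have : (fun s => (t • h) s) = fun s => t • h s := rfl
    rw [show (∫ s in (0:ℝ)..y, (t • h) s) = ∫ s in (0:ℝ)..y, t • h s from rfl,
      intervalIntegral.integral_smul]
    simp [smul_eq_mul]
  · ring

lemma J_lipschitz {h : ℝ → ℝ} {C : ℝ} (hmeas : Measurable h)
    (hbdd : ∀ x : ℝ, 0 ≤ x → |h x| ≤ C) : LipschitzWith C.toNNReal (J h) := by
  have hC0 : 0 ≤ C := le_trans (abs_nonneg _) (hbdd 0 le_rfl)
  have hint : ∀ x : ℝ, 0 ≤ x → IntervalIntegrable h volume 0 x := by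
    intro x hx
    rw [intervalIntegrable_iff]
    apply Measure.integrableOn_of_bounded (M := C)
    · rw [Set.uIoc_of_le hx]
      exact measure_Ioc_lt_top.ne
    · exact hmeas.aestronglyMeasurable
    · refine (ae_restrict_iff' measurableSet_uIoc).mpr (ae_of_all _ fun s hs => ?_)
      rw [Set.uIoc_of_le hx] at hs
      exact (Real.norm_eq_abs _).le.trans_eq' rfl |>.trans (hbdd s hs.1.le)
  have key : ∀ x y : ℝ, y ≤ x → |J h x - J h y| ≤ C * (x - y) := by
    intro x y hyx
    by_cases hx : 0 ≤ x
    · by_cases hy : 0 ≤ y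
      · have hdiff : J h x - J h y = ∫ s in y..x, h s := by
          unfold J
          rw [if_pos hx, if_pos hy]
          exact intervalIntegral.integral_interval_sub_left (hint x hx) (hint y hy)
        rw [hdiff]
        have := intervalIntegral.norm_integral_le_of_norm_le_const (a := y) (b := x) (C := C)
          (f := h) (fun s hs => by
            rw [Set.uIoc_of_le hyx] at hs
            exact (Real.norm_eq_abs _) ▸ hbdd s (hy.trans hs.1.le))
        rwa [Real.norm_eq_abs, abs_of_nonneg (by linarith : (0:ℝ) ≤ x - y)] at this
      · have hJy : J h y = 0 := if_neg hy
        rw [hJy, sub_zero]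
        have hJx : J h x = ∫ s in (0:ℝ)..x, h s := if_pos hx
        rw [hJx]
        have := intervalIntegral.norm_integral_le_of_norm_le_const (a := 0) (b := x) (C := C)
          (f := h) (fun s hs => by
            rw [Set.uIoc_of_le hx] at hs
            exact (Real.norm_eq_abs _) ▸ hbdd s hs.1.le)
        rw [Real.norm_eq_abs] at this
        calc |∫ s in (0:ℝ)..x, h s| ≤ C * |x - 0| := this
          _ ≤ C * (x - y) := by
              rw [sub_zero, abs_of_nonneg hx]
              have : x ≤ x - y := by linarith [not_le.mp hy]
              nlinarith
    · have hy : ¬ (0 ≤ y) := fun hy => hx (hy.trans hyx)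
      unfold J
      rw [if_neg hx, if_neg hy]
      simp
      nlinarith [not_le.mp hx, not_le.mp hy]
  apply LipschitzWith.of_dist_le_mul
  intro x y
  rw [Real.dist_eq, Real.dist_eq, Real.coe_toNNReal _ hC0]
  rcases le_total y x with hyx | hxy
  · exact (key x y hyx).trans (by rw [abs_of_nonneg (by linarith : (0:ℝ) ≤ x - y)])
  · rw [abs_sub_comm (J h x), abs_sub_comm x]
    exact (key y x hxy).trans (by rw [abs_of_nonneg (by linarith : (0:ℝ) ≤ y - x)])

lemma lipschitz_const_mul {K : NNReal} {f : ℝ → ℝ} (hf : LipschitzWith K f) (t : ℝ) :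
    LipschitzWith (‖t‖₊ * K) (fun y => t * f y) := by
  apply LipschitzWith.of_dist_le_mul
  intro x y
  have := hf.dist_le_mul x y
  rw [Real.dist_eq, Real.dist_eq] at *
  rw [← mul_sub, abs_mul]
  push_cast
  rw [Real.norm_eq_abs]
  nlinarith [abs_nonneg t]

/-- If `Jh > 0` on `(a,b)` and `Jh = 0` outside `(a,b)` (`0 ≤ a < b`), then:
(i) points outside `(a,b)` are fixed by every `T_{th}`;
(ii) for `x ∈ (a,b)`, the map `t ↦ T_{th} x` is strictly increasing, takes values in
`(a,b)`, tends to `b` at `+∞` and to `a` at `-∞`, and is a bijection from `ℝ` onto `(a,b)`. -/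
theorem stmt4 (h : ℝ → ℝ) (hmeas : Measurable h) (C : ℝ)
    (hbdd : ∀ x : ℝ, 0 ≤ x → |h x| ≤ C) (a b : ℝ) (ha : 0 ≤ a) (hab : a < b)
    (hpos : ∀ x ∈ Set.Ioo a b, 0 < J h x)
    (hzero : ∀ x : ℝ, x ∉ Set.Ioo a b → J h x = 0) :
    (∀ x : ℝ, 0 ≤ x → x ∉ Set.Ioo a b →
        ∀ t : ℝ, ∀ z : ℝ → ℝ, IsSol (t • h) x z → z 1 = x) ∧
      (∀ x ∈ Set.Ioo a b, ∀ Z : ℝ → ℝ → ℝ, (∀ t : ℝ, IsSol (t • h) x (Z t)) →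
        StrictMono (fun t : ℝ => Z t 1) ∧
        (∀ t : ℝ, Z t 1 ∈ Set.Ioo a b) ∧
        Tendsto (fun t : ℝ => Z t 1) atTop (nhds b) ∧
        Tendsto (fun t : ℝ => Z t 1) atBot (nhds a) ∧
        Set.BijOn (fun t : ℝ => Z t 1) Set.univ (Set.Ioo a b)) := by
  have hJlip : LipschitzWith C.toNNReal (J h) := J_lipschitz hmeas hbdd
  have hlipt : ∀ t : ℝ, LipschitzWith (‖t‖₊ * C.toNNReal) (J (t • h)) := by
    intro t
    have : J (t • h) = fun y => t * J h y := funext fun y => J_smul h t y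
    rw [this]
    exact lipschitz_const_mul hJlip t
  constructor
  · -- part (i)
    intro x hx0 hxout t z hz
    have hw : ∀ s : ℝ, HasDerivAt (fun _ : ℝ => x) (J (t • h) x) s := by
      intro s
      rw [J_smul, hzero x hxout, mul_zero]
      exact hasDerivAt_const s x
    exact ode_uniq (hlipt t) hz.2 hw 0 (by simpa using hz.1) 1
  · -- part (ii)
    intro x hx Z hZ
    set g : ℝ → ℝ := fun t => Z 1 t with hgdef
    have hg0 : g 0 = x := (hZ 1).1
    have hg' : ∀ s : ℝ, HasDerivAt g (J h (g s)) s := by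
      intro s
      have := (hZ 1).2 s
      rwa [J_smul, one_mul] at this
    have hkey : ∀ t : ℝ, Z t 1 = g t := by
      intro t
      have hw : ∀ s : ℝ, HasDerivAt (fun s => g (t * s)) (J (t • h) (g (t * s))) s := by
        intro s
        have h1 : HasDerivAt (fun s : ℝ => t * s) t s := by
          simpa using (hasDerivAt_id s).const_mul t
        have h2 := (hg' (t * s)).comp s h1
        rw [J_smul]
        rw [mul_comm]
        exact h2
      have := ode_uniq (hlipt t) (hZ t).2 hw 0 (by simpa [(hZ t).1, hg0]) 1
      simpa using this
    have hcont : Continuous g :=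
      continuous_iff_continuousAt.mpr fun t => (hg' t).differentiableAt.continuousAt
    -- g never hits a or b
    have hne_b : ∀ t : ℝ, g t ≠ b := by
      intro t hgt
      have hwb : ∀ s : ℝ, HasDerivAt (fun _ : ℝ => b) (J h b) s := by
        intro s
        rw [hzero b (fun hb => lt_irrefl b hb.2)]
        exact hasDerivAt_const s b
      have := ode_uniq hJlip hg' hwb t hgt 0
      rw [hg0] at this
      exact absurd this (ne_of_lt hx.2)
    have hne_a : ∀ t : ℝ, g t ≠ a := by
      intro t hgt
      have hwa : ∀ s : ℝ, HasDerivAt (fun _ : ℝ => a) (J h a) s := by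
        intro s
        rw [hzero a (fun hb => lt_irrefl a hb.1)]
        exact hasDerivAt_const s a
      have := ode_uniq hJlip hg' hwa t hgt 0
      rw [hg0] at this
      exact absurd this (ne_of_gt hx.1)
    -- g stays in (a,b)
    have hmem : ∀ t : ℝ, g t ∈ Set.Ioo a b := by
      intro t
      by_contra hout
      have hor : g t ≤ a ∨ b ≤ g t := by
        rcases not_and_or.mp (Set.mem_Ioo.not.mp hout) with h1 | h2
        · exact Or.inl (not_lt.mp h1)
        · exact Or.inr (not_lt.mp h2)
      rcases hor with hle | hge
      · have ham : a ∈ Set.uIcc (g t) (g 0) := by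
          rw [hg0]
          exact Set.mem_uIcc.mpr (Or.inl ⟨hle, hx.1.le⟩)
        obtain ⟨s, _, hs⟩ := intermediate_value_uIcc hcont.continuousOn ham
        exact hne_a s hs
      · have hbm : b ∈ Set.uIcc (g 0) (g t) := by
          rw [hg0]
          exact Set.mem_uIcc.mpr (Or.inl ⟨hx.2.le, hge⟩)
        obtain ⟨s, _, hs⟩ := intermediate_value_uIcc hcont.continuousOn hbm
        exact hne_b s hs
    -- strict monotonicity
    have hSM : StrictMono g := by
      apply strictMono_of_deriv_pos
      intro t
      rw [(hg' t).deriv]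
      exact hpos _ (hmem t)
    have hmono : Monotone g := hSM.monotone
    -- tendsto atTop to b
    have hbddA : BddAbove (Set.range g) :=
      ⟨b, Set.forall_mem_range.mpr fun t => (hmem t).2.le⟩
    have hbddB : BddBelow (Set.range g) :=
      ⟨a, Set.forall_mem_range.mpr fun t => (hmem t).1.le⟩
    have htopL : Tendsto g atTop (nhds (⨆ t, g t)) := tendsto_atTop_ciSup hmono hbddA
    have hbotM : Tendsto g atBot (nhds (⨅ t, g t)) := tendsto_atBot_ciInf hmono hbddB
    set L := ⨆ t, g t with hLdef
    set M := ⨅ t, g t with hMdef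
    have hgL : ∀ t, g t ≤ L := fun t => le_ciSup hbddA t
    have hMg : ∀ t, M ≤ g t := fun t => ciInf_le hbddB t
    have hLb : L ≤ b := ciSup_le fun t => (hmem t).2.le
    have haM : a ≤ M := le_ciInf fun t => (hmem t).1.le
    have haL : a < L := lt_of_lt_of_le hx.1 (hg0 ▸ hgL 0)
    have hMb : M < b := lt_of_le_of_lt (hg0 ▸ hMg 0) hx.2
    have hLeqb : L = b := by
      by_contra hne
      have hLmem : L ∈ Set.Ioo a b := ⟨haL, lt_of_le_of_ne hLb hne⟩
      set ε := J h L / 2 with hεdef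
      have hε : 0 < ε := half_pos (hpos _ hLmem)
      have hJc : Tendsto (fun t => J h (g t)) atTop (nhds (J h L)) :=
        (hJlip.continuous.tendsto L).comp htopL
      have hev : ∀ᶠ t in atTop, ε < J h (g t) :=
        hJc.eventually_const_lt (by linarith [hpos _ hLmem])
      rw [eventually_atTop] at hev
      obtain ⟨t₀, ht₀⟩ := hev
      have hmo : MonotoneOn (fun u => g u - ε * u) (Set.Ici t₀) := by
        apply monotoneOn_of_deriv_nonneg (convex_Ici t₀)
        · exact (hcont.sub (continuous_const.mul continuous_id)).continuousOn
        · intro u _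
          exact ((hg' u).sub ((hasDerivAt_id u).const_mul ε)).differentiableAt.differentiableWithinAt
        · intro u hu
          rw [interior_Ici] at hu
          have hd : deriv (fun u => g u - ε * u) u = J h (g u) - ε := by
            have := ((hg' u).sub (by simpa using (hasDerivAt_id u).const_mul ε))
            exact this.deriv
          rw [hd]
          linarith [ht₀ u (le_of_lt hu)]
      set t1 := t₀ + (b - g t₀) / ε + 1 with ht1def
      have hdnn : 0 ≤ (b - g t₀) / ε := div_nonneg (by linarith [(hmem t₀).2]) hε.le
      have h01 : t₀ ≤ t1 := by rw [ht1def]; linarith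
      have hφ := hmo (Set.self_mem_Ici) (Set.mem_Ici.mpr h01) h01
      simp only at hφ
      have hεt : ε * t1 - ε * t₀ = (b - g t₀) + ε := by
        rw [ht1def]
        field_simp
        ring
      have hlt := (hmem t1).2
      nlinarith
    have hMeqa : M = a := by
      by_contra hne
      have hMmem : M ∈ Set.Ioo a b := ⟨lt_of_le_of_ne haM (Ne.symm hne), hMb⟩
      set ε := J h M / 2 with hεdef
      have hε : 0 < ε := half_pos (hpos _ hMmem)
      have hJc : Tendsto (fun t => J h (g t)) atBot (nhds (J h M)) :=
        (hJlip.continuous.tendsto M).comp hbotM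
      have hev : ∀ᶠ t in atBot, ε < J h (g t) :=
        hJc.eventually_const_lt (by linarith [hpos _ hMmem])
      rw [eventually_atBot] at hev
      obtain ⟨t₀, ht₀⟩ := hev
      have hmo : MonotoneOn (fun u => g u - ε * u) (Set.Iic t₀) := by
        apply monotoneOn_of_deriv_nonneg (convex_Iic t₀)
        · exact (hcont.sub (continuous_const.mul continuous_id)).continuousOn
        · intro u _
          exact ((hg' u).sub ((hasDerivAt_id u).const_mul ε)).differentiableAt.differentiableWithinAt
        · intro u hu
          rw [interior_Iic] at hu
          have hd : deriv (fun u => g u - ε * u) u = J h (g u) - ε := by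
            have := ((hg' u).sub (by simpa using (hasDerivAt_id u).const_mul ε))
            exact this.deriv
          rw [hd]
          linarith [ht₀ u (le_of_lt hu)]
      set t1 := t₀ - (g t₀ - a) / ε - 1 with ht1def
      have hdnn : 0 ≤ (g t₀ - a) / ε := div_nonneg (by linarith [(hmem t₀).1]) hε.le
      have h01 : t1 ≤ t₀ := by rw [ht1def]; linarith
      have hφ := hmo (Set.mem_Iic.mpr h01) (Set.self_mem_Iic) h01
      simp only at hφ
      have hεt : ε * t₀ - ε * t1 = (g t₀ - a) + ε := by
        rw [ht1def]
        field_simp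
        ring
      have hgt := (hmem t1).1
      nlinarith
    have htop : Tendsto g atTop (nhds b) := hLeqb ▸ htopL
    have hbot : Tendsto g atBot (nhds a) := hMeqa ▸ hbotM
    have hfun : (fun t : ℝ => Z t 1) = g := funext hkey
    rw [hfun]
    refine ⟨hSM, fun t => by rw [hkey t]; exact hmem t, htop, hbot, ?_, ?_, ?_⟩
    · exact fun t _ => hmem t
    · exact Set.injOn_of_injective hSM.injective
    · intro y hy
      obtain ⟨t1, h1⟩ := (hbot.eventually_lt_const hy.1).exists
      obtain ⟨t2, h2⟩ := (htop.eventually_const_lt hy.2).exists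
      have h12 : t1 ≤ t2 := le_of_lt (hSM.lt_iff_lt.mp (h1.trans h2))
      obtain ⟨s, _, hs⟩ := intermediate_value_Icc h12 hcont.continuousOn ⟨h1.le, h2.le⟩
      exact ⟨s, trivial, hs⟩
end

section
/- Let (U, 𝒰, Π) be a measure space, c : U → ℝ^m measurable, a : ℝ^m → ℝ^m continuous, and U_N ∈ 𝒰 with Π(U_N) < ∞ for each N. Then for every N, the function (y, l) ↦ Π{u ∈ U_N : ⟨a(y + c(u)) − a(y), l⟩ ≠ 0} is lower semicontinuous on ℝ^m × ℝ^m. -/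
open MeasureTheory Set Filter

/-- For a measure `μ` (called `Π` in the paper) on `U`, `c : U → ℝ^m` measurable,
`a : ℝ^m → ℝ^m` continuous and `U_N` of finite measure, the function
`(y, l) ↦ Π {u ∈ U_N : ⟨a (y + c u) − a y, l⟩ ≠ 0}` is lower semicontinuous
on `ℝ^m × ℝ^m`. -/
theorem stmt10 (m : ℕ) (U : Type*) [MeasurableSpace U] (μ : Measure U)
    (c : U → EuclideanSpace ℝ (Fin m)) (hc : Measurable c)
    (a : EuclideanSpace ℝ (Fin m) → EuclideanSpace ℝ (Fin m)) (ha : Continuous a)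
    (UN : Set U) (hUN : MeasurableSet UN) (hUNfin : μ UN < ⊤) :
    LowerSemicontinuous (fun p : EuclideanSpace ℝ (Fin m) × EuclideanSpace ℝ (Fin m) =>
      μ {u | u ∈ UN ∧ (inner ℝ (a (p.1 + c u) - a p.1) p.2 : ℝ) ≠ 0}) := by
  set E : EuclideanSpace ℝ (Fin m) := default with hE
  set S : EuclideanSpace ℝ (Fin m) × EuclideanSpace ℝ (Fin m) → Set U :=
    fun p => {u | u ∈ UN ∧ (inner ℝ (a (p.1 + c u) - a p.1) p.2 : ℝ) ≠ 0} with hS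
  have hmeas : ∀ p, MeasurableSet (S p) := by
    intro p
    refine hUN.inter ?_
    have : Measurable fun u => (inner ℝ (a (p.1 + c u) - a p.1) p.2 : ℝ) := by
      have hcont : Continuous fun v : EuclideanSpace ℝ (Fin m) =>
          (inner ℝ (a (p.1 + v) - a p.1) p.2 : ℝ) := by
        exact ((ha.comp (continuous_const.add continuous_id)).sub continuous_const).inner
          continuous_const
      exact hcont.measurable.comp hc
    exact this (measurableSet_singleton 0).compl
  intro p t ht
  by_contra hcon
  rw [Filter.not_eventually] at hcon
  obtain ⟨ps, hps, hpsle⟩ := exists_seq_forall_of_frequently hcon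
  simp only [not_lt] at hpsle
  -- Fatou
  have key : μ (S p) ≤ liminf (fun n => μ (S (ps n))) atTop := by
    have h1 : ∀ q, μ (S q) = ∫⁻ u, (S q).indicator 1 u ∂μ := by
      intro q; rw [lintegral_indicator_one (hmeas q)]
    calc μ (S p) = ∫⁻ u, (S p).indicator 1 u ∂μ := h1 p
      _ ≤ ∫⁻ u, liminf (fun n => (S (ps n)).indicator 1 u) atTop ∂μ := by
          refine lintegral_mono fun u => ?_
          by_cases hu : u ∈ S p
          · have hev : ∀ᶠ n in atTop, u ∈ S (ps n) := by
              have hcont : Continuous fun q : EuclideanSpace ℝ (Fin m) × EuclideanSpace ℝ (Fin m) =>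
                  (inner ℝ (a (q.1 + c u) - a q.1) q.2 : ℝ) :=
                (((ha.comp (continuous_fst.add continuous_const)).sub
                  (ha.comp continuous_fst)).inner continuous_snd)
              have hne : (inner ℝ (a (p.1 + c u) - a p.1) p.2 : ℝ) ≠ 0 := hu.2
              have := (hcont.tendsto p).comp hps
              have hev' : ∀ᶠ n in atTop,
                  (inner ℝ (a ((ps n).1 + c u) - a (ps n).1) (ps n).2 : ℝ) ≠ 0 :=
                this (isOpen_compl_singleton.mem_nhds hne)
              exact hev'.mono fun n hn => ⟨hu.1, hn⟩
            calc (S p).indicator (1 : U → ENNReal) u = 1 := by simp [hu]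
              _ ≤ liminf (fun n => (S (ps n)).indicator (1 : U → ENNReal) u) atTop := by
                  refine le_liminf_of_le (by isBoundedDefault) ?_
                  exact hev.mono fun n hn => by simp [hn]
          · simp [hu]
      _ ≤ liminf (fun n => ∫⁻ u, (S (ps n)).indicator 1 u ∂μ) atTop :=
          lintegral_liminf_le fun n => (measurable_one.indicator (hmeas (ps n)))
      _ = liminf (fun n => μ (S (ps n))) atTop := by simp_rw [← h1]
  have : liminf (fun n => μ (S (ps n))) atTop ≤ t :=
    liminf_le_of_frequently_le (Frequently.of_forall hpsle)
  exact absurd (lt_of_le_of_lt (key.trans this) ht) (lt_irrefl _)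
end

section
/- Let (U, 𝒰, Π) be a measure space, c : U → ℝ^m measurable, a : ℝ^m → ℝ^m continuous, and let U_N ∈ 𝒰, N ≥ 1, be an increasing sequence of sets with Π(U_N) < ∞ for every N and ∪_N U_N = U. Fix x ∈ ℝ^m and ε > 0, and suppose that Π{u ∈ U : ⟨Δ(y,u), l⟩ ≠ 0} = +∞ for every y with ‖y − x‖ ≤ ε and every unit vector l ∈ ℝ^m. Then γ_N := inf{Π{u ∈ U_N : ⟨Δ(y,u), l⟩ ≠ 0} : ‖y − x‖ ≤ ε, ‖l‖ = 1} → +∞ as N → +∞. -/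
open MeasureTheory Set Filter

open scoped ENNReal NNReal

set_option maxHeartbeats 1000000


/-- Relation (3.7) of the paper: if `Π {u : ⟨Δ(y,u), l⟩ ≠ 0} = ∞` for every `y` in the
closed ball `B̄(x,ε)` and every unit vector `l`, and `U_N ↑ U` with `Π (U_N) < ∞`, then
`γ_N = inf_{‖y−x‖ ≤ ε, ‖l‖ = 1} Π {u ∈ U_N : ⟨Δ(y,u), l⟩ ≠ 0} → ∞` as `N → ∞`,
where `Δ(y,u) = a(y + c(u)) − a(y)`. (`μ` stands for the measure `Π`.) -/
theorem stmt11 (m : ℕ) (U : Type*) [MeasurableSpace U] (μ : Measure U)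
    (c : U → EuclideanSpace ℝ (Fin m)) (hc : Measurable c)
    (a : EuclideanSpace ℝ (Fin m) → EuclideanSpace ℝ (Fin m)) (ha : Continuous a)
    (UN : ℕ → Set U) (hUNmeas : ∀ N, MeasurableSet (UN N)) (hUNmono : Monotone UN)
    (hUNfin : ∀ N, μ (UN N) < ⊤) (hUNunion : (⋃ N, UN N) = Set.univ)
    (x : EuclideanSpace ℝ (Fin m)) (ε : ℝ) (hε : 0 < ε)
    (hinf : ∀ y ∈ Metric.closedBall x ε, ∀ l : EuclideanSpace ℝ (Fin m), ‖l‖ = 1 →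
      μ {u | (inner ℝ (a (y + c u) - a y) l : ℝ) ≠ 0} = ⊤) :
    Tendsto (fun N : ℕ =>
        ⨅ (y : EuclideanSpace ℝ (Fin m)) (_ : y ∈ Metric.closedBall x ε)
          (l : EuclideanSpace ℝ (Fin m)) (_ : ‖l‖ = 1),
          μ {u | u ∈ UN N ∧ (inner ℝ (a (y + c u) - a y) l : ℝ) ≠ 0})
      atTop (nhds ⊤) := by
  classical
  let E := EuclideanSpace ℝ (Fin m)
  set S : (EuclideanSpace ℝ (Fin m) × EuclideanSpace ℝ (Fin m)) → Set U :=
    fun p => {u | (inner ℝ (a (p.1 + c u) - a p.1) p.2 : ℝ) ≠ 0} with hS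
  have hcont : ∀ u, Continuous fun p : EuclideanSpace ℝ (Fin m) × EuclideanSpace ℝ (Fin m) =>
      (inner ℝ (a (p.1 + c u) - a p.1) p.2 : ℝ) := by
    intro u
    have h1 : Continuous fun p : EuclideanSpace ℝ (Fin m) × EuclideanSpace ℝ (Fin m) =>
        a (p.1 + c u) - a p.1 := by
      have hx1 : Continuous fun p : EuclideanSpace ℝ (Fin m) × EuclideanSpace ℝ (Fin m) =>
          a (p.1 + c u) := ha.comp (continuous_fst.add continuous_const)
      have hx2 : Continuous fun p : EuclideanSpace ℝ (Fin m) × EuclideanSpace ℝ (Fin m) =>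
          a p.1 := ha.comp continuous_fst
      exact hx1.sub hx2
    exact h1.inner continuous_snd
  have hSmeas : ∀ p : EuclideanSpace ℝ (Fin m) × EuclideanSpace ℝ (Fin m),
      MeasurableSet (S p) := by
    intro p
    have h1 : Continuous fun v : EuclideanSpace ℝ (Fin m) =>
        (inner ℝ (a (p.1 + v) - a p.1) p.2 : ℝ) := by
      have hx1 : Continuous fun v : EuclideanSpace ℝ (Fin m) => a (p.1 + v) :=
        ha.comp (continuous_const.add continuous_id)
      exact (hx1.sub continuous_const).inner continuous_const
    have hm : Measurable fun u => (inner ℝ (a (p.1 + c u) - a p.1) p.2 : ℝ) :=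
      h1.measurable.comp hc
    exact hm (measurableSet_singleton (0 : ℝ)).compl
  set K : Set (EuclideanSpace ℝ (Fin m) × EuclideanSpace ℝ (Fin m)) :=
    Metric.closedBall x ε ×ˢ Metric.sphere (0 : EuclideanSpace ℝ (Fin m)) 1 with hK
  have hKcomp : IsCompact K := (isCompact_closedBall x ε).prod (isCompact_sphere 0 1)
  -- key claim
  have key : ∀ b' : ℝ≥0∞, b' ≠ ⊤ → ∃ N₀ : ℕ, ∀ p ∈ K, b' ≤ μ (UN N₀ ∩ S p) := by
    intro b' hb'
    by_contra h
    push_neg at h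
    choose p hpK hp using h
    obtain ⟨q, hqK, φ, hφ, hlim⟩ := hKcomp.tendsto_subseq hpK
    have hb'main : ∀ N₀ : ℕ, μ (UN N₀ ∩ S q) ≤ b' := by
      intro N₀
      set A : ℕ → Set U := fun k => UN N₀ ∩ S (p (φ k)) with hA
      set T : ℕ → Set U := fun k => ⋂ (j : ℕ) (_ : k ≤ j), A j with hT
      have hTmono : Monotone T := by
        intro k k' hkk'
        exact Set.iInter₂_mono' fun j hj => ⟨j, le_trans hkk' hj, le_rfl⟩
      have hsub : UN N₀ ∩ S q ⊆ ⋃ k, T k := by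
        intro u hu
        have htend : Tendsto
            (fun k => (inner ℝ (a ((p (φ k)).1 + c u) - a (p (φ k)).1) (p (φ k)).2 : ℝ))
            atTop (nhds (inner ℝ (a (q.1 + c u) - a q.1) q.2 : ℝ)) :=
          ((hcont u).tendsto q).comp hlim
        have hev : ∀ᶠ k in atTop,
            (inner ℝ (a ((p (φ k)).1 + c u) - a (p (φ k)).1) (p (φ k)).2 : ℝ) ≠ 0 :=
          htend.eventually_ne hu.2
        obtain ⟨k, hk⟩ := hev.exists_forall_of_atTop
        exact Set.mem_iUnion.2 ⟨k, Set.mem_iInter₂.2 fun j hj => ⟨hu.1, hk j hj⟩⟩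
      calc μ (UN N₀ ∩ S q) ≤ μ (⋃ k, T k) := measure_mono hsub
        _ = ⨆ k, μ (T k) := (hTmono.directed_le).measure_iUnion
        _ ≤ b' := by
            refine iSup_le fun k => ?_
            have h1 : T k ⊆ A (max k N₀) :=
              Set.iInter₂_subset (max k N₀) (le_max_left _ _)
            have h2 : A (max k N₀) ⊆ UN (φ (max k N₀)) ∩ S (p (φ (max k N₀))) :=
              Set.inter_subset_inter_left _
                (hUNmono (le_trans (le_max_right _ _) (hφ.le_apply)))
            exact le_of_lt (lt_of_le_of_lt (measure_mono (h1.trans h2)) (hp _))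
    have hμq : μ (S q) = ⊤ := by
      have hq1 : q.1 ∈ Metric.closedBall x ε := hqK.1
      have hq2 : ‖q.2‖ = 1 := by
        simpa [mem_sphere_zero_iff_norm] using hqK.2
      exact hinf q.1 hq1 q.2 hq2
    have : μ (S q) ≤ b' := by
      have hU : (⋃ N, UN N ∩ S q) = S q := by
        rw [← Set.iUnion_inter, hUNunion, Set.univ_inter]
      calc μ (S q) = μ (⋃ N, UN N ∩ S q) := by rw [hU]
        _ = ⨆ N, μ (UN N ∩ S q) :=
            (Monotone.directed_le (fun i j h =>
              Set.inter_subset_inter_left _ (hUNmono h))).measure_iUnion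
        _ ≤ b' := iSup_le hb'main
    exact hb' (top_le_iff.1 (hμq ▸ this))
  refine ENNReal.tendsto_nhds_top fun n => ?_
  obtain ⟨N₀, hN₀⟩ := key (n + 1) (by simp [ENNReal.add_eq_top])
  filter_upwards [eventually_ge_atTop N₀] with N hN
  have : (n + 1 : ℝ≥0∞) ≤
      ⨅ (y : EuclideanSpace ℝ (Fin m)) (_ : y ∈ Metric.closedBall x ε)
        (l : EuclideanSpace ℝ (Fin m)) (_ : ‖l‖ = 1),
        μ {u | u ∈ UN N ∧ (inner ℝ (a (y + c u) - a y) l : ℝ) ≠ 0} := by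
    refine le_iInf fun y => le_iInf fun hy => le_iInf fun l => le_iInf fun hl => ?_
    have hpK : (y, l) ∈ K := ⟨hy, by simpa [mem_sphere_zero_iff_norm] using hl⟩
    have h1 : (n + 1 : ℝ≥0∞) ≤ μ (UN N₀ ∩ S (y, l)) := hN₀ _ hpK
    refine h1.trans (measure_mono ?_)
    exact Set.inter_subset_inter_left _ (hUNmono hN)
  exact lt_of_lt_of_le (ENNReal.lt_add_right (ENNReal.natCast_ne_top n) one_ne_zero) this
end

section
/- Let (U, 𝒰, Π) be a measure space, c : U → ℝ measurable, a ∈ C¹(ℝ, ℝ), and x ∈ ℝ. Suppose: (i) Π{u : c(u) ≠ 0} = +∞; (ii) Π{u : |c(u)| ≥ r} < +∞ for every r > 0; (iii) there exists δ > 0 such that for every z ∈ ℝ the set {y ∈ (x−δ, x+δ) : a(y) = z} is finite. Then there exists ε > 0 such that for every y with |y − x| ≤ ε, Π{u : a(y + c(u)) − a(y) ≠ 0} = +∞. -/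
open MeasureTheory Set Filter

/-- Proposition 4.3 of the paper (one-dimensional sufficient condition for (11)):
if `Π {u : c u ≠ 0} = ∞`, `Π {u : |c u| ≥ r} < ∞` for every `r > 0`, and for some
`δ > 0` every level set of `a` in `(x−δ, x+δ)` is finite, then there is `ε > 0` such
that `Π {u : a(y + c u) − a(y) ≠ 0} = ∞` for every `y` with `|y − x| ≤ ε`.
(`μ` stands for the measure `Π`.) -/
theorem stmt12 (U : Type*) [MeasurableSpace U] (μ : Measure U)
    (c : U → ℝ) (hc : Measurable c) (a : ℝ → ℝ) (ha : ContDiff ℝ 1 a) (x : ℝ)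
    (h1 : μ {u | c u ≠ 0} = ⊤)
    (h2 : ∀ r : ℝ, 0 < r → μ {u | r ≤ |c u|} < ⊤)
    (h3 : ∃ δ : ℝ, 0 < δ ∧ ∀ z : ℝ,
      Set.Finite {y | y ∈ Set.Ioo (x - δ) (x + δ) ∧ a y = z}) :
    ∃ ε : ℝ, 0 < ε ∧ ∀ y : ℝ, |y - x| ≤ ε →
      μ {u | a (y + c u) - a y ≠ 0} = ⊤ := by
  obtain ⟨δ, hδ, h3⟩ := h3
  refine ⟨δ / 4, by positivity, fun y hy => ?_⟩
  set F : Set ℝ := {t | t ∈ Set.Ioo (x - δ) (x + δ) ∧ a t = a y} with hFdef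
  have hF : F.Finite := h3 (a y)
  set S : Set U := {u | c u ≠ 0 ∧ a (y + c u) = a y} with hSdef
  have hsub : {u | c u ≠ 0} ⊆ {u | a (y + c u) - a y ≠ 0} ∪ S := by
    intro u hu
    by_cases h : a (y + c u) - a y = 0
    · exact Or.inr ⟨hu, by linarith [sub_eq_zero.mp h]⟩
    · exact Or.inl h
  have hSsub : S ⊆ {u | δ / 2 ≤ |c u|} ∪ ⋃ t ∈ F \ {y}, {u | c u = t - y} := by
    rintro u ⟨hcu, hau⟩
    by_cases h : δ / 2 ≤ |c u|
    · exact Or.inl h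
    · right
      push_neg at h
      obtain ⟨hy1, hy2⟩ := abs_le.mp hy
      obtain ⟨hc1, hc2⟩ := abs_lt.mp h
      have htF : y + c u ∈ F \ {y} := by
        refine ⟨⟨⟨by linarith, by linarith⟩, hau⟩, ?_⟩
        simp only [Set.mem_singleton_iff]
        intro heq
        exact hcu (by linarith)
      exact Set.mem_biUnion htF (by simp)
  have hSfin : μ S < ⊤ := by
    refine lt_of_le_of_lt (measure_mono hSsub) ?_
    refine lt_of_le_of_lt (measure_union_le _ _) ?_
    have hbig : μ {u | δ / 2 ≤ |c u|} < ⊤ := h2 _ (by positivity)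
    have hfin : μ (⋃ t ∈ F \ {y}, {u | c u = t - y}) < ⊤ := by
      refine measure_biUnion_lt_top hF.diff fun t ht => ?_
      have htne : t ≠ y := ht.2
      have hpos : 0 < |t - y| := abs_pos.mpr (sub_ne_zero.mpr htne)
      refine lt_of_le_of_lt (measure_mono ?_) (h2 _ hpos)
      intro u hu
      simp only [Set.mem_setOf_eq] at hu ⊢
      rw [hu]
    exact ENNReal.add_lt_top.mpr ⟨hbig, hfin⟩
  have hle : (⊤ : ENNReal) ≤ μ {u | a (y + c u) - a y ≠ 0} + μ S := by
    calc (⊤ : ENNReal) = μ {u | c u ≠ 0} := h1.symm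
      _ ≤ μ ({u | a (y + c u) - a y ≠ 0} ∪ S) := measure_mono hsub
      _ ≤ _ := measure_union_le _ _
  by_contra hA
  exact absurd (top_le_iff.mp hle) (ENNReal.add_ne_top.mpr ⟨hA, hSfin.ne⟩)
end

section
/- For every real t > 0 the following holds: for each N ∈ ℕ the series Σ_{k=1}^∞ (exp(2πi·N!/k!) − 1) converges absolutely in ℂ (its terms with k ≤ N vanish since N!/k! is then an integer, and |exp(iθ) − 1| ≤ |θ| controls the tail), and lim_{N→∞} exp( t · Σ_{k=1}^∞ (exp(2πi·N!/k!) − 1) ) = 1. -/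
open Filter Complex

private lemma aux_expI (θ : ℝ) :
    ‖Complex.exp ((θ : ℂ) * Complex.I) - 1‖ ≤ |θ| := by
  have h1 : Complex.exp ((θ : ℂ) * Complex.I) - 1 =
      ((Real.cos θ - 1 : ℝ) : ℂ) + ((Real.sin θ : ℝ) : ℂ) * Complex.I := by
    rw [Complex.exp_mul_I]
    push_cast
    ring
  rw [h1, Complex.norm_def, Complex.normSq_add_mul_I]
  have hc : Real.cos θ = 1 - 2 * Real.sin (θ / 2) ^ 2 := by
    have h2 := Real.cos_two_mul' (θ / 2)
    rw [show 2 * (θ / 2) = θ by ring] at h2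
    nlinarith [Real.sin_sq_add_cos_sq (θ / 2)]
  have habs : |Real.sin (θ / 2)| ≤ |θ / 2| := Real.abs_sin_le_abs
  have hsq : Real.sin (θ / 2) ^ 2 ≤ (θ / 2) ^ 2 := by
    have := mul_self_le_mul_self (abs_nonneg _) habs
    rwa [← sq, ← sq, _root_.sq_abs, _root_.sq_abs] at this
  have key : (Real.cos θ - 1) ^ 2 + Real.sin θ ^ 2 ≤ θ ^ 2 := by
    nlinarith [Real.sin_sq_add_cos_sq θ]
  calc Real.sqrt ((Real.cos θ - 1) ^ 2 + Real.sin θ ^ 2)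
      ≤ Real.sqrt (θ ^ 2) := Real.sqrt_le_sqrt key
    _ = |θ| := Real.sqrt_sq_eq_abs θ

private lemma aux_vanish (N k : ℕ) (hkN : k ≤ N) :
    Complex.exp (((2 * Real.pi : ℝ) : ℂ) * Complex.I *
      ((Nat.factorial N : ℂ) / (Nat.factorial k : ℂ))) - 1 = 0 := by
  obtain ⟨m, hm⟩ := Nat.factorial_dvd_factorial hkN
  have hk : (Nat.factorial k : ℂ) ≠ 0 := Nat.cast_ne_zero.2 k.factorial_ne_zero
  have hdiv : (Nat.factorial N : ℂ) / (Nat.factorial k : ℂ) = (m : ℂ) := by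
    rw [hm]; push_cast; field_simp
  rw [hdiv, show ((2 * Real.pi : ℝ) : ℂ) * Complex.I * (m : ℂ)
      = (m : ℤ) * (2 * (Real.pi : ℂ) * Complex.I) by push_cast; ring,
    Complex.exp_int_mul_two_pi_mul_I, sub_self]

private lemma aux_fact_bound (N k : ℕ) (h : N ≤ k) :
    Nat.factorial N * ((N + 1) * 2 ^ (k - N)) ≤ Nat.factorial (k + 1) := by
  induction k, h using Nat.le_induction with
  | base => simp [Nat.factorial_succ, Nat.mul_comm]
  | succ k hk ih =>
      have h2 : k + 1 - N = (k - N) + 1 := by omega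
      rw [h2, pow_succ]
      calc Nat.factorial N * ((N + 1) * (2 ^ (k - N) * 2))
          = Nat.factorial N * ((N + 1) * 2 ^ (k - N)) * 2 := by ring
        _ ≤ Nat.factorial (k + 1) * 2 := by
            exact Nat.mul_le_mul_right 2 ih
        _ ≤ Nat.factorial (k + 1) * (k + 2) := by
            exact Nat.mul_le_mul_left _ (by omega)
        _ = Nat.factorial (k + 2) := by
            rw [Nat.factorial_succ (k + 1)]; ring

private lemma aux_term_bound (N k : ℕ) (h : N ≤ k) :
    ‖Complex.exp (((2 * Real.pi : ℝ) : ℂ) * Complex.I *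
        ((Nat.factorial N : ℂ) / (Nat.factorial (k + 1) : ℂ))) - 1‖
      ≤ (2 * Real.pi / (N + 1)) * (1 / 2) ^ (k - N) := by
  set r : ℝ := (Nat.factorial N : ℝ) / (Nat.factorial (k + 1) : ℝ) with hr
  have hcast : ((2 * Real.pi : ℝ) : ℂ) * Complex.I *
      ((Nat.factorial N : ℂ) / (Nat.factorial (k + 1) : ℂ))
      = ((2 * Real.pi * r : ℝ) : ℂ) * Complex.I := by
    rw [hr]; push_cast; ring
  rw [hcast]
  refine (aux_expI _).trans ?_
  have hrpos : 0 ≤ r := by positivity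
  rw [_root_.abs_of_nonneg (by positivity : (0:ℝ) ≤ 2 * Real.pi * r)]
  have hb : r ≤ 1 / ((N + 1) * 2 ^ (k - N)) := by
    rw [hr, div_le_div_iff₀ (by positivity) (by positivity)]
    have := aux_fact_bound N k h
    have : (Nat.factorial N * ((N + 1) * 2 ^ (k - N)) : ℝ)
        ≤ (Nat.factorial (k + 1) : ℝ) := by exact_mod_cast this
    push_cast at this ⊢
    linarith
  have hpi : 0 < Real.pi := Real.pi_pos
  calc 2 * Real.pi * r ≤ 2 * Real.pi * (1 / ((N + 1) * 2 ^ (k - N))) := by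
        apply mul_le_mul_of_nonneg_left hb (by positivity)
    _ = (2 * Real.pi / (N + 1)) * (1 / 2) ^ (k - N) := by
        rw [div_pow, one_pow]
        field_simp

/-- Example 4.1 of the paper: for every `t > 0`, for each `N` the series
`Σ_{k ≥ 1} (exp(2πi·N!/k!) − 1)` converges absolutely (its terms with `k ≤ N` vanish
since `N!/k!` is then an integer), and
`exp(t · Σ_{k ≥ 1}(exp(2πi·N!/k!) − 1)) → 1` as `N → ∞`. -/
theorem stmt16 (t : ℝ) (ht : 0 < t) :
    (∀ N : ℕ, ∀ k : ℕ, 1 ≤ k → k ≤ N →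
      Complex.exp (((2 * Real.pi : ℝ) : ℂ) * Complex.I *
        ((Nat.factorial N : ℂ) / (Nat.factorial k : ℂ))) - 1 = 0) ∧
    (∀ N : ℕ, Summable (fun k : ℕ =>
      ‖(Complex.exp (((2 * Real.pi : ℝ) : ℂ) * Complex.I *
        ((Nat.factorial N : ℂ) / (Nat.factorial (k + 1) : ℂ))) - 1)‖)) ∧
    Tendsto (fun N : ℕ =>
        Complex.exp ((t : ℂ) * ∑' k : ℕ,
          (Complex.exp (((2 * Real.pi : ℝ) : ℂ) * Complex.I *
            ((Nat.factorial N : ℂ) / (Nat.factorial (k + 1) : ℂ))) - 1)))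
      atTop (nhds 1) := by
  set g : ℕ → ℕ → ℂ := fun N k =>
    Complex.exp (((2 * Real.pi : ℝ) : ℂ) * Complex.I *
      ((Nat.factorial N : ℂ) / (Nat.factorial (k + 1) : ℂ))) - 1 with hg
  have hpi : (0:ℝ) < Real.pi := Real.pi_pos
  have hvan : ∀ N k : ℕ, k + 1 ≤ N → g N k = 0 := fun N k hk => aux_vanish N (k+1) hk
  have hbound : ∀ N k : ℕ, ‖g N k‖ ≤ (2 * Real.pi * 2 ^ N) * (1 / 2) ^ k := by
    intro N k
    rcases le_or_gt N k with h | h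
    · have hb := aux_term_bound N k h
      refine hb.trans ?_
      have h2N : (0:ℝ) < (1/2 : ℝ) ^ N := by positivity
      have heq : ((1:ℝ)/2) ^ (k - N) * (1/2) ^ N = (1/2) ^ k := by
        rw [← pow_add]; congr 1; omega
      have heq2 : ((1:ℝ)/2) ^ (k - N) = (1/2) ^ k / (1/2) ^ N :=
        (eq_div_iff h2N.ne').mpr heq
      have heq3 : ((1:ℝ)/2) ^ k / (1/2) ^ N = 2 ^ N * (1/2) ^ k := by
        field_simp
        rw [← mul_pow]; norm_num
      rw [heq2, heq3]
      have h1 : 2 * Real.pi / (N + 1 : ℝ) ≤ 2 * Real.pi := by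
        apply div_le_self (by positivity)
        have : (0:ℝ) ≤ (N:ℝ) := Nat.cast_nonneg N
        linarith
      calc 2 * Real.pi / (↑N + 1) * (2 ^ N * (1/2) ^ k)
          ≤ 2 * Real.pi * (2 ^ N * (1/2) ^ k) := by
            apply mul_le_mul_of_nonneg_right h1 (by positivity)
        _ = (2 * Real.pi * 2 ^ N) * (1/2) ^ k := by ring
    · rw [hvan N k (by omega)]
      simp only [norm_zero]
      positivity
  have hsummable : ∀ N : ℕ, Summable (fun k : ℕ => ‖g N k‖) := by
    intro N
    refine Summable.of_nonneg_of_le (fun k => norm_nonneg _) (hbound N) ?_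
    exact (summable_geometric_of_lt_one (by norm_num) (by norm_num)).mul_left _
  refine ⟨fun N k _ hk => aux_vanish N k hk, hsummable, ?_⟩
  have hS : ∀ N : ℕ, ‖∑' k : ℕ, g N k‖ ≤ 4 * Real.pi / (N + 1) := by
    intro N
    have hnorm : (fun k : ℕ => ‖g N k‖) = fun k => ‖g N k‖ := by
      funext k; rfl
    have hsum : Summable fun k : ℕ => ‖g N k‖ := by rw [hnorm]; exact hsummable N
    refine (norm_tsum_le_tsum_norm hsum).trans ?_
    have hsplit := Summable.sum_add_tsum_nat_add (f := fun k : ℕ => ‖g N k‖) N hsum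
    have hzero : (∑ i ∈ Finset.range N, ‖g N i‖) = 0 := by
      apply Finset.sum_eq_zero
      intro i hi
      rw [hvan N i (by simpa using Finset.mem_range.mp hi)]
      simp
    rw [← hsplit, hzero, zero_add]
    have hterm : ∀ i : ℕ, ‖g N (i + N)‖ ≤ (2 * Real.pi / ((N:ℝ) + 1)) * (1/2) ^ i := by
      intro i
      have := aux_term_bound N (i + N) (Nat.le_add_left N i)
      rw [Nat.add_sub_cancel] at this
      simpa [hg] using this
    have hgeo2 : Summable (fun i : ℕ => (2 * Real.pi / ((N:ℝ) + 1)) * (1/2) ^ i) :=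
      (summable_geometric_of_lt_one (by norm_num) (by norm_num)).mul_left _
    refine (Summable.tsum_le_tsum hterm ((summable_nat_add_iff N).mpr hsum) hgeo2).trans ?_
    rw [tsum_mul_left, tsum_geometric_of_lt_one (by norm_num) (by norm_num)]
    rw [show ((1:ℝ) - 1/2)⁻¹ = 2 by norm_num]
    apply le_of_eq
    field_simp
    ring
  have hten : Tendsto (fun N : ℕ => (4 * Real.pi / ((N:ℝ) + 1))) atTop (nhds 0) := by
    have h1 : Tendsto (fun N : ℕ => (1:ℝ) / ((N:ℝ) + 1)) atTop (nhds 0) :=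
      tendsto_one_div_add_atTop_nhds_zero_nat
    have := h1.const_mul (4 * Real.pi)
    simpa [mul_one_div, div_eq_mul_inv] using this
  have h0 : Tendsto (fun N : ℕ => ∑' k : ℕ, g N k) atTop (nhds 0) :=
    squeeze_zero_norm (fun N => hS N) hten
  have h1 : Tendsto (fun N : ℕ => (t : ℂ) * ∑' k : ℕ, g N k) atTop (nhds 0) := by
    have := h0.const_mul ((t : ℂ))
    simpa using this
  have h2 : Tendsto (fun N : ℕ => Complex.exp ((t : ℂ) * ∑' k : ℕ, g N k)) atTop
      (nhds (Complex.exp 0)) := (Complex.continuous_exp.tendsto 0).comp h1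
  rw [Complex.exp_zero] at h2
  exact h2
end
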